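/- Assume that for every (β, s) ∈ Δ(Ω) × S the receiver's best response â(β, s) = argmax_{a∈A} ∑_ω β(ω) u(s, a, ω) is unique, and set v̂(β, s) = ∑_ω β(ω) v(s, â(β, s), ω). Then for every Perfect Bayesian Equilibrium of the finite signaling game at prior μ ∈ Δ(Ω) with sender expected payoff z = ∑_ω μ(ω) ∑_s π(s|ω) v(s, α_s, ω), the point (μ, z) belongs to the convex hull of the union of the pooling payoff graphs, convexHull(⋃_{s∈S} v̂_s^P). -/

import Mathlib

open scoped BigOperators

noncomputable section

/-- A pooling equilibrium exists at `(μb, sb)`: there are beliefs `β` with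
`β sb = μb` and receiver-optimal responses `α` such that, for every state in the
support of `μb`, the action `sb` is optimal for the sender. -/
def PoolingAt {Ω S A : Type*} [Fintype Ω] [Fintype S] [Fintype A]
    (v u : S → A → Ω → ℝ) (μb : Ω → ℝ) (sb : S) : Prop :=
  ∃ (β : S → Ω → ℝ) (α : S → A),
    (∀ t, β t ∈ stdSimplex ℝ Ω) ∧ β sb = μb ∧
    (∀ t a, (∑ ω, β t ω * u t a ω) ≤ (∑ ω, β t ω * u t (α t) ω)) ∧
    (∀ ω, 0 < μb ω → ∀ s', v s' (α s') ω ≤ v sb (α sb) ω)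

/-- The pooling payoff graph of action `s`, where the sender's interim payoff is
computed using the receiver's (unique) best response `arg`. -/
def poolingGraph {Ω S A : Type*} [Fintype Ω] [Fintype S] [Fintype A]
    (v u : S → A → Ω → ℝ) (arg : (Ω → ℝ) → S → A) (s : S) :
    Set ((Ω → ℝ) × ℝ) :=
  {q | q.1 ∈ stdSimplex ℝ Ω ∧ PoolingAt v u q.1 s ∧
    q.2 = ∑ ω, q.1 ω * v s (arg q.1 s) ω}

/-- Assume the receiver's best response `arg β s` is unique for
every belief and sender action. Then the prior and sender expected payoff of every
Perfect Bayesian Equilibrium lie in the convex hull of the union of the pooling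
payoff graphs. -/
theorem PBE_payoff_mem_convexHull_pooling_graphs
    {Ω S A : Type*} [Fintype Ω] [Nonempty Ω] [Fintype S] [Nonempty S]
    [Fintype A] [Nonempty A]
    (v u : S → A → Ω → ℝ)
    (arg : (Ω → ℝ) → S → A)
    (harg : ∀ β ∈ stdSimplex ℝ Ω, ∀ (s : S) (a : A), a ≠ arg β s →
      (∑ ω, β ω * u s a ω) < (∑ ω, β ω * u s (arg β s) ω))
    (μ : Ω → ℝ) (hμ : μ ∈ stdSimplex ℝ Ω)
    (π : Ω → S → ℝ) (hπ : ∀ ω, π ω ∈ stdSimplex ℝ S)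
    (β : S → Ω → ℝ) (hβ : ∀ s, β s ∈ stdSimplex ℝ Ω)
    (α : S → A)
    (hcons : ∀ s, 0 < (∑ ω, μ ω * π ω s) →
      ∀ ω, β s ω = μ ω * π ω s / ∑ ω', μ ω' * π ω' s)
    (hrec : ∀ s a, (∑ ω, β s ω * u s a ω) ≤ (∑ ω, β s ω * u s (α s) ω))
    (hsend : ∀ ω, 0 < μ ω → ∀ s, 0 < π ω s →
      ∀ s', v s' (α s') ω ≤ v s (α s) ω)
    (z : ℝ) (hz : z = ∑ ω, μ ω * ∑ s, π ω s * v s (α s) ω) :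
    ((μ, z) : (Ω → ℝ) × ℝ) ∈
      convexHull ℝ (⋃ s : S, poolingGraph v u arg s) := by
  classical
  set w : S → ℝ := fun s => ∑ ω, μ ω * π ω s with hwdef
  have hw0 : ∀ s, 0 ≤ w s := fun s =>
    Finset.sum_nonneg fun ω _ => mul_nonneg (hμ.1 ω) ((hπ ω).1 s)
  have hwzero : ∀ s, w s = 0 → ∀ ω, μ ω * π ω s = 0 := by
    intro s hs ω
    exact (Finset.sum_eq_zero_iff_of_nonneg
      (fun ω _ => mul_nonneg (hμ.1 ω) ((hπ ω).1 s))).mp hs ω (Finset.mem_univ ω)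
  have hwsum : ∑ s, w s = 1 := by
    simp only [hwdef]
    rw [Finset.sum_comm]
    have : ∀ ω : Ω, ∑ s, μ ω * π ω s = μ ω := by
      intro ω
      rw [← Finset.mul_sum, (hπ ω).2, mul_one]
    rw [Finset.sum_congr rfl fun ω _ => this ω, hμ.2]
  have hα : ∀ s, α s = arg (β s) s := by
    intro s
    by_contra h
    exact ((harg (β s) (hβ s) s (α s) h).not_ge (hrec s (arg (β s) s))).elim
  have hws : ∀ s ω, w s * β s ω = μ ω * π ω s := by
    intro s ω
    rcases (hw0 s).lt_or_eq with hpos | h0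
    · rw [hcons s hpos ω]
      field_simp
      rw [mul_assoc]
      exact mul_div_cancel_left₀ _ (ne_of_gt hpos)
    · rw [← h0, zero_mul]
      exact (hwzero s h0.symm ω).symm
  -- the points
  set q : S → (Ω → ℝ) × ℝ := fun s => (β s, ∑ ω, β s ω * v s (α s) ω) with hqdef
  have hmem : ∀ s, 0 < w s → q s ∈ ⋃ t : S, poolingGraph v u arg t := by
    intro s hs
    refine Set.mem_iUnion.mpr ⟨s, hβ s, ⟨β, α, hβ, rfl, hrec, ?_⟩, ?_⟩
    · intro ω hω s'
      have hβω : β s ω = μ ω * π ω s / w s := hcons s hs ω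
      have hmp : 0 < μ ω * π ω s := by
        have h1 : 0 < μ ω * π ω s / w s := hβω ▸ hω
        have h2 : 0 < (μ ω * π ω s / w s) * w s := mul_pos h1 hs
        rwa [div_mul_cancel₀ _ (ne_of_gt hs)] at h2
      have hμω : 0 < μ ω := by
        rcases mul_pos_iff.mp hmp with ⟨h1, _⟩ | ⟨h1, _⟩
        · exact h1
        · linarith [hμ.1 ω]
      have hπω : 0 < π ω s := by
        rcases mul_pos_iff.mp hmp with ⟨_, h2⟩ | ⟨_, h2⟩
        · exact h2
        · linarith [(hπ ω).1 s]
      exact hsend ω hμω s hπω s'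
    · simp only [hqdef]
      rw [hα s]
  set t : Finset S := Finset.univ.filter (fun s => 0 < w s) with htdef
  have hsum_t : ∑ s ∈ t, w s = 1 := by
    rw [← hwsum]
    apply Finset.sum_filter_of_ne
    intro s _ hne
    exact lt_of_le_of_ne (hw0 s) (Ne.symm hne)
  have hkey : t.centerMass w q = (μ, z) := by
    rw [Finset.centerMass, hsum_t, inv_one, one_smul]
    have hext : ∑ s ∈ t, w s • q s = ∑ s, w s • q s := by
      apply Finset.sum_subset (Finset.subset_univ t)
      intro s _ hst
      have : w s = 0 := by
        by_contra hne
        exact hst (Finset.mem_filter.mpr ⟨Finset.mem_univ s,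
          lt_of_le_of_ne (hw0 s) (Ne.symm hne)⟩)
      rw [this, zero_smul]
    rw [hext]
    refine Prod.ext ?_ ?_
    · rw [Prod.fst_sum]
      funext ω
      simp only [hqdef, Prod.smul_fst, Finset.sum_apply, Pi.smul_apply, smul_eq_mul]
      rw [Finset.sum_congr rfl fun s _ => hws s ω, ← Finset.mul_sum, (hπ ω).2, mul_one]
    · rw [Prod.snd_sum]
      simp only [hqdef, Prod.smul_snd, smul_eq_mul]
      have hterm : ∀ s : S, w s * ∑ ω, β s ω * v s (α s) ω
          = ∑ ω, μ ω * π ω s * v s (α s) ω := by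
        intro s
        rw [Finset.mul_sum]
        exact Finset.sum_congr rfl fun ω _ => by rw [← mul_assoc, hws s ω]
      rw [Finset.sum_congr rfl fun s _ => hterm s, Finset.sum_comm, hz]
      refine Finset.sum_congr rfl fun ω _ => ?_
      rw [Finset.mul_sum]
      exact Finset.sum_congr rfl fun s _ => by ring
  rw [← hkey]
  exact Finset.centerMass_mem_convexHull t (fun s _ => hw0 s)
    (by rw [hsum_t]; norm_num)
    (fun s hs => hmem s (Finset.mem_filter.mp hs).2)
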